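/- Let f : ℝ → ℝ^6 be any differentiable solution of the so(4) free rigid body system. Then each of the four functions t ↦ C1(f(t)), t ↦ C2(f(t)), t ↦ H(f(t)) and t ↦ I(f(t)) is constant on ℝ; that is, C1, C2, H, and the Mishchenko integral I are constants of motion of the system. -/

import Mathlib

set_option maxHeartbeats 2000000


noncomputable section

/-- The right-hand side of the so(4) free rigid body system on ℝ⁶,
coordinates `(x1,x2,x3,y1,y2,y3) = (p 0, p 1, p 2, p 3, p 4, p 5)`. -/
def vf (l1 l2 l3 l4 : ℝ) (p : Fin 6 → ℝ) : Fin 6 → ℝ :=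
  ![(1/(l1+l2) - 1/(l1+l3)) * (p 1 * p 2) + (1/(l3+l4) - 1/(l2+l4)) * (p 4 * p 5),
    (1/(l2+l3) - 1/(l1+l2)) * (p 0 * p 2) + (1/(l1+l4) - 1/(l3+l4)) * (p 3 * p 5),
    (1/(l1+l3) - 1/(l2+l3)) * (p 0 * p 1) + (1/(l2+l4) - 1/(l1+l4)) * (p 3 * p 4),
    (1/(l3+l4) - 1/(l1+l3)) * (p 1 * p 5) + (1/(l1+l2) - 1/(l2+l4)) * (p 2 * p 4),
    (1/(l2+l3) - 1/(l3+l4)) * (p 0 * p 5) + (1/(l1+l4) - 1/(l1+l2)) * (p 2 * p 3),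
    (1/(l2+l4) - 1/(l2+l3)) * (p 0 * p 4) + (1/(l1+l3) - 1/(l1+l4)) * (p 1 * p 3)]

/-- Lyapunov stability of an equilibrium `e` of the so(4) free rigid body system:
for every ε > 0 there is δ > 0 such that every differentiable solution starting
δ-close to `e` stays ε-close to `e` for all t ≥ 0. -/
def IsLyapunovStable (l1 l2 l3 l4 : ℝ) (e : Fin 6 → ℝ) : Prop :=
  ∀ ε > 0, ∃ δ > 0, ∀ f : ℝ → (Fin 6 → ℝ),
    (∀ t : ℝ, HasDerivAt f (vf l1 l2 l3 l4 (f t)) t) →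
    ‖f 0 - e‖ < δ → ∀ t ≥ 0, ‖f t - e‖ < ε

/-- Casimir `C1`. -/
def C1fun (p : Fin 6 → ℝ) : ℝ :=
  (p 0 ^ 2 + p 1 ^ 2 + p 2 ^ 2 + p 3 ^ 2 + p 4 ^ 2 + p 5 ^ 2) / 2

/-- Casimir `C2`. -/
def C2fun (p : Fin 6 → ℝ) : ℝ := p 0 * p 3 + p 1 * p 4 + p 2 * p 5

/-- The Hamiltonian `H`. -/
def Hfun (l1 l2 l3 l4 : ℝ) (p : Fin 6 → ℝ) : ℝ :=
  (1/2) * (p 0 ^ 2 / (l2 + l3) + p 1 ^ 2 / (l1 + l3) + p 2 ^ 2 / (l1 + l2)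
    + p 3 ^ 2 / (l1 + l4) + p 4 ^ 2 / (l2 + l4) + p 5 ^ 2 / (l3 + l4))

/-- Mishchenko's integral `I`. -/
def Ifun (l1 l2 l3 l4 : ℝ) (p : Fin 6 → ℝ) : ℝ :=
  (l2^2 + l3^2) * p 0 ^ 2 + (l1^2 + l3^2) * p 1 ^ 2 + (l1^2 + l2^2) * p 2 ^ 2
    + (l1^2 + l4^2) * p 3 ^ 2 + (l2^2 + l4^2) * p 4 ^ 2 + (l3^2 + l4^2) * p 5 ^ 2

/-- `C1`, `C2`, `H` and Mishchenko's integral `I` are constants of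
motion of the so(4) free rigid body system. -/
lemma vf_eq (l1 l2 l3 l4 : ℝ) (p : Fin 6 → ℝ) :
    vf l1 l2 l3 l4 p 0 = (1/(l1+l2) - 1/(l1+l3)) * (p 1 * p 2) + (1/(l3+l4) - 1/(l2+l4)) * (p 4 * p 5)
  ∧ vf l1 l2 l3 l4 p 1 = (1/(l2+l3) - 1/(l1+l2)) * (p 0 * p 2) + (1/(l1+l4) - 1/(l3+l4)) * (p 3 * p 5)
  ∧ vf l1 l2 l3 l4 p 2 = (1/(l1+l3) - 1/(l2+l3)) * (p 0 * p 1) + (1/(l2+l4) - 1/(l1+l4)) * (p 3 * p 4)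
  ∧ vf l1 l2 l3 l4 p 3 = (1/(l3+l4) - 1/(l1+l3)) * (p 1 * p 5) + (1/(l1+l2) - 1/(l2+l4)) * (p 2 * p 4)
  ∧ vf l1 l2 l3 l4 p 4 = (1/(l2+l3) - 1/(l3+l4)) * (p 0 * p 5) + (1/(l1+l4) - 1/(l1+l2)) * (p 2 * p 3)
  ∧ vf l1 l2 l3 l4 p 5 = (1/(l2+l4) - 1/(l2+l3)) * (p 0 * p 4) + (1/(l1+l3) - 1/(l1+l4)) * (p 1 * p 3) :=
  ⟨rfl, rfl, rfl, rfl, rfl, rfl⟩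

theorem constants_of_motion
    (l1 l2 l3 l4 : ℝ) (h12 : l2 < l1) (h23 : l3 < l2) (h34 : l4 < l3)
    (s12 : 0 < l1 + l2) (s13 : 0 < l1 + l3) (s14 : 0 < l1 + l4)
    (s23 : 0 < l2 + l3) (s24 : 0 < l2 + l4) (s34 : 0 < l3 + l4)
    (f : ℝ → (Fin 6 → ℝ))
    (hf : ∀ t : ℝ, HasDerivAt f (vf l1 l2 l3 l4 (f t)) t) :
    (∀ s t : ℝ, C1fun (f s) = C1fun (f t)) ∧
    (∀ s t : ℝ, C2fun (f s) = C2fun (f t)) ∧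
    (∀ s t : ℝ, Hfun l1 l2 l3 l4 (f s) = Hfun l1 l2 l3 l4 (f t)) ∧
    (∀ s t : ℝ, Ifun l1 l2 l3 l4 (f s) = Ifun l1 l2 l3 l4 (f t)) := by
  have n12 := s12.ne'
  have n13 := s13.ne'
  have n14 := s14.ne'
  have n23 := s23.ne'
  have n24 := s24.ne'
  have n34 := s34.ne'
  have hc : ∀ (i : Fin 6) (t : ℝ),
      HasDerivAt (fun t => f t i) (vf l1 l2 l3 l4 (f t) i) t := fun i t =>
    (ContinuousLinearMap.proj i (R := ℝ) (φ := fun _ : Fin 6 => ℝ)).hasFDerivAt.comp_hasDerivAt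
      t (hf t)
  have key : ∀ g : (Fin 6 → ℝ) → ℝ, (∀ t : ℝ, HasDerivAt (fun t => g (f t)) 0 t) →
      ∀ s t : ℝ, g (f s) = g (f t) := by
    intro g hg s t
    exact is_const_of_deriv_eq_zero (fun x => (hg x).differentiableAt)
      (fun x => (hg x).deriv) s t
  refine ⟨key _ ?_, key _ ?_, key _ ?_, key _ ?_⟩
  · intro t
    have h := (((((((hc 0 t).pow 2).add ((hc 1 t).pow 2)).add ((hc 2 t).pow 2)).add
      ((hc 3 t).pow 2)).add ((hc 4 t).pow 2)).add ((hc 5 t).pow 2)).div_const 2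
    convert h using 1
    case e'_4 => rfl
    case e'_5 => rfl
    case e'_8 => rfl
    obtain ⟨e0, e1, e2, e3, e4, e5⟩ := vf_eq l1 l2 l3 l4 (f t)
    rw [e0, e1, e2, e3, e4, e5]
    ring
  · intro t
    have h := (((hc 0 t).mul (hc 3 t)).add ((hc 1 t).mul (hc 4 t))).add
      ((hc 2 t).mul (hc 5 t))
    convert h using 1
    case e'_4 => rfl
    case e'_5 => rfl
    case e'_8 => rfl
    obtain ⟨e0, e1, e2, e3, e4, e5⟩ := vf_eq l1 l2 l3 l4 (f t)
    rw [e0, e1, e2, e3, e4, e5]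
    ring
  · intro t
    have h := ((((((((hc 0 t).pow 2).div_const (l2+l3)).add
      (((hc 1 t).pow 2).div_const (l1+l3))).add
      (((hc 2 t).pow 2).div_const (l1+l2))).add
      (((hc 3 t).pow 2).div_const (l1+l4))).add
      (((hc 4 t).pow 2).div_const (l2+l4))).add
      (((hc 5 t).pow 2).div_const (l3+l4))).const_mul (1/2 : ℝ)
    convert h using 1
    case e'_4 => rfl
    case e'_5 => rfl
    case e'_8 => rfl
    obtain ⟨e0, e1, e2, e3, e4, e5⟩ := vf_eq l1 l2 l3 l4 (f t)
    rw [e0, e1, e2, e3, e4, e5]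
    ring
  · intro t
    have h := (((((((hc 0 t).pow 2).const_mul (l2^2+l3^2)).add
      (((hc 1 t).pow 2).const_mul (l1^2+l3^2))).add
      (((hc 2 t).pow 2).const_mul (l1^2+l2^2))).add
      (((hc 3 t).pow 2).const_mul (l1^2+l4^2))).add
      (((hc 4 t).pow 2).const_mul (l2^2+l4^2))).add
      (((hc 5 t).pow 2).const_mul (l3^2+l4^2))
    convert h using 1
    case e'_4 => rfl
    case e'_5 => rfl
    case e'_8 => rfl
    obtain ⟨e0, e1, e2, e3, e4, e5⟩ := vf_eq l1 l2 l3 l4 (f t)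
    rw [e0, e1, e2, e3, e4, e5]
    have h12 : (l1+l2)*(1/(l1+l2)) = 1 := mul_one_div_cancel n12
    have h13 : (l1+l3)*(1/(l1+l3)) = 1 := mul_one_div_cancel n13
    have h14 : (l1+l4)*(1/(l1+l4)) = 1 := mul_one_div_cancel n14
    have h23 : (l2+l3)*(1/(l2+l3)) = 1 := mul_one_div_cancel n23
    have h24 : (l2+l4)*(1/(l2+l4)) = 1 := mul_one_div_cancel n24
    have h34 : (l3+l4)*(1/(l3+l4)) = 1 := mul_one_div_cancel n34
    linear_combination (-(2*(f t 2)*((f t 0)*(f t 1)-(f t 3)*(f t 4))*(l2-l1))) * h12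
      + (-(2*(f t 1)*((f t 0)*(f t 2)-(f t 3)*(f t 5))*(l1-l3))) * h13
      + (-(2*(f t 0)*((f t 1)*(f t 2)-(f t 4)*(f t 5))*(l3-l2))) * h23
      + (-(2*(f t 3)*((f t 1)*(f t 5)-(f t 2)*(f t 4))*(l1-l4))) * h14
      + (-(2*(f t 4)*((f t 2)*(f t 3)-(f t 0)*(f t 5))*(l2-l4))) * h24
      + (-(2*(f t 5)*((f t 0)*(f t 4)-(f t 1)*(f t 3))*(l3-l4))) * h34
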